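/- Let N : L(A) → L(B) be a CPTP map between finite-dimensional complex Hilbert spaces and suppose there exists a unit vector ψ ∈ A with N(|ψ⟩⟨ψ|) = 1_B/|B|. Let ε > 0 and let N̂ : L(A) → L(B) be a CPTP map such that |S(N̂(ρ)) − S(N(ρ))| ≤ ε for every density operator ρ on A. Then the Kraus rank of N̂ satisfies r_K(N̂) ≥ e^{−ε}·|B|. -/

import Mathlib

open scoped Kronecker ENNReal ComplexOrder
open Matrix MeasureTheory

noncomputable section
attribute [local instance] Classical.propDecidable

/-- The singular values of a square complex matrix. -/
def singularValues {m : Type*} [Fintype m] [DecidableEq m] (X : Matrix m m ℂ) : m → ℝ :=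
  fun i => Real.sqrt ((Matrix.posSemidef_conjTranspose_mul_self X).1.eigenvalues i)

/-- The Schatten `p`-norm of a square complex matrix (`p = ⊤` giving the operator norm). -/
def schattenNorm {m : Type*} [Fintype m] [DecidableEq m] (p : ℝ≥0∞) (X : Matrix m m ℂ) : ℝ :=
  if p = ⊤ then ⨆ i, singularValues X i
  else (∑ i, singularValues X i ^ p.toReal) ^ (1 / p.toReal)

/-- `Φ` has the Kraus decomposition given by the family `K`. -/
def HasKraus {a b : Type*} [Fintype a] [Fintype b] {s : ℕ}
    (Φ : Matrix a a ℂ → Matrix b b ℂ) (K : Fin s → Matrix b a ℂ) : Prop :=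
  ∀ X, Φ X = ∑ i, K i * X * (K i)ᴴ

/-- Completely positive map: admits some Kraus decomposition. -/
def IsCP {a b : Type*} [Fintype a] [Fintype b]
    (Φ : Matrix a a ℂ → Matrix b b ℂ) : Prop :=
  ∃ (s : ℕ) (K : Fin s → Matrix b a ℂ), HasKraus Φ K

/-- Trace preserving map. -/
def IsTP {a b : Type*} [Fintype a] [Fintype b]
    (Φ : Matrix a a ℂ → Matrix b b ℂ) : Prop :=
  ∀ X, (Φ X).trace = X.trace

/-- Completely positive and trace preserving map. -/
def IsCPTP {a b : Type*} [Fintype a] [Fintype b]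
    (Φ : Matrix a a ℂ → Matrix b b ℂ) : Prop :=
  IsCP Φ ∧ IsTP Φ

/-- The Kraus rank: minimal number of Kraus operators. -/
def krausRank {a b : Type*} [Fintype a] [Fintype b]
    (Φ : Matrix a a ℂ → Matrix b b ℂ) : ℕ :=
  sInf {s : ℕ | ∃ K : Fin s → Matrix b a ℂ, HasKraus Φ K}

/-- A density operator: positive semidefinite with trace one. -/
def IsDensity {a : Type*} [Fintype a] [DecidableEq a] (ρ : Matrix a a ℂ) : Prop :=
  ρ.PosSemidef ∧ ρ.trace = 1

/-- Loewner order. -/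
def loewnerLE {a : Type*} [Fintype a] (X Y : Matrix a a ℂ) : Prop :=
  (Y - X).PosSemidef

/-- von Neumann entropy. -/
def vonNeumannEntropy {a : Type*} [Fintype a] [DecidableEq a] (ρ : Matrix a a ℂ) : ℝ :=
  if h : ρ.IsHermitian then -∑ i, h.eigenvalues i * Real.log (h.eigenvalues i) else 0

/-- Rényi entropy of order `p ∈ (1,∞]`. -/
def renyiEntropy {a : Type*} [Fintype a] [DecidableEq a] (p : ℝ≥0∞) (ρ : Matrix a a ℂ) : ℝ :=
  if p = ⊤ then -Real.log (schattenNorm ⊤ ρ)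
  else -(p.toReal / (p.toReal - 1)) * Real.log (schattenNorm p ρ)

/-- The factor `p/(p-1)`, read as `1` for `p = ∞`. -/
def pFactor (p : ℝ≥0∞) : ℝ := if p = ⊤ then 1 else p.toReal / (p.toReal - 1)

/-- Square root of a positive semidefinite matrix (junk value otherwise). -/
def psdSqrt {a : Type*} [Fintype a] [DecidableEq a] (ρ : Matrix a a ℂ) : Matrix a a ℂ :=
  if h : ρ.PosSemidef then (h.1.eigenvectorUnitary : Matrix a a ℂ) *
    diagonal (fun i => ((Real.sqrt (h.1.eigenvalues i) : ℝ) : ℂ)) *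
    (star h.1.eigenvectorUnitary : Matrix a a ℂ) else 0

/-- Fidelity `F(σ, ω) = ‖√σ √ω‖₁`. -/
def fidelity {a : Type*} [Fintype a] [DecidableEq a] (σ ω : Matrix a a ℂ) : ℝ :=
  schattenNorm 1 (psdSqrt σ * psdSqrt ω)

/-- Rank-one projection `|v⟩⟨v|`. -/
def projVec {a : Type*} (v : a → ℂ) : Matrix a a ℂ :=
  Matrix.of fun i j => v i * star (v j)

/-- Partial trace over the second tensor factor. -/
def ptraceSnd {b e : Type*} [Fintype e] (M : Matrix (b × e) (b × e) ℂ) : Matrix b b ℂ :=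
  Matrix.of fun i j => ∑ k, M (i, k) (j, k)

/-- Partial trace over the first tensor factor. -/
def ptraceFst {b e : Type*} [Fintype b] (M : Matrix (b × e) (b × e) ℂ) : Matrix e e ℂ :=
  Matrix.of fun k l => ∑ i, M (i, k) (i, l)

/-- The channel `ρ ↦ tr_E (V ρ V†)` associated to an isometry `V : A → B ⊗ E`. -/
def stineChan {a b e : Type*} [Fintype a] [Fintype b] [Fintype e]
    (V : Matrix (b × e) a ℂ) : Matrix a a ℂ → Matrix b b ℂ :=
  fun ρ => ptraceSnd (V * ρ * Vᴴ)

/-- The CP map `N_φ : ρ ↦ |E| tr_E ((1 ⊗ |φ⟩⟨φ|) V ρ V† (1 ⊗ |φ⟩⟨φ|))`. -/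
def stineChanPinned {a b e : Type*} [Fintype a] [Fintype b] [Fintype e] [DecidableEq b]
    (V : Matrix (b × e) a ℂ) (φ : e → ℂ) : Matrix a a ℂ → Matrix b b ℂ :=
  fun ρ => (Fintype.card e : ℂ) •
    ptraceSnd (((1 : Matrix b b ℂ) ⊗ₖ projVec φ) * (V * ρ * Vᴴ) * ((1 : Matrix b b ℂ) ⊗ₖ projVec φ))

/-- `⟨y| M |y⟩`. -/
def qForm {b : Type*} [Fintype b] (y : b → ℂ) (M : Matrix b b ℂ) : ℂ :=
  star y ⬝ᵥ M *ᵥ y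

/-- The uniform (Haar, rotation-invariant) probability measure on the unit sphere of `ℂ^s`. -/
def IsUniformOnSphere {s : ℕ} (μ : Measure (Fin s → ℂ)) : Prop :=
  IsProbabilityMeasure μ ∧
  μ {v : Fin s → ℂ | ∑ i, ‖v i‖ ^ 2 = 1}ᶜ = 0 ∧
  ∀ U ∈ Matrix.unitaryGroup (Fin s) ℂ, μ.map (fun v => U *ᵥ v) = μ



section Aux

open FiniteDimensional

lemma myRank_add_le {m n : Type*} [Fintype m] [Fintype n] [DecidableEq n]
    (A B : Matrix m n ℂ) : (A + B).rank ≤ A.rank + B.rank := by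
  have h : LinearMap.range (A + B).mulVecLin ≤
      LinearMap.range A.mulVecLin ⊔ LinearMap.range B.mulVecLin := by
    rw [Matrix.mulVecLin_add]
    rintro y ⟨x, rfl⟩
    exact Submodule.add_mem_sup (LinearMap.mem_range_self _ x) (LinearMap.mem_range_self _ x)
  exact (Submodule.finrank_mono h).trans
    (Submodule.finrank_add_le_finrank_add_finrank _ _)

lemma myRank_sum_le {ι m n : Type*} [Fintype m] [Fintype n] [DecidableEq n]
    (s : Finset ι) (f : ι → Matrix m n ℂ) :
    (∑ i ∈ s, f i).rank ≤ ∑ i ∈ s, (f i).rank := by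
  classical
  induction s using Finset.cons_induction with
  | empty => simp
  | cons i s hi ih =>
    rw [Finset.sum_cons, Finset.sum_cons]
    exact (myRank_add_le _ _).trans (by omega)

lemma myTrace_eq_sum_eigs {n : Type*} [Fintype n] [DecidableEq n] {A : Matrix n n ℂ}
    (hA : A.IsHermitian) : A.trace = ∑ i, (hA.eigenvalues i : ℂ) := by
  conv_lhs => rw [hA.spectral_theorem]
  rw [Unitary.conjStarAlgAut_apply, Matrix.trace_mul_cycle, Unitary.coe_star_mul_self, Matrix.one_mul,
    Matrix.trace_diagonal]
  simp

lemma myEig_smul_one {n : Type*} [Fintype n] [DecidableEq n] {A : Matrix n n ℂ} (c : ℝ)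
    (hAc : A = (c : ℂ) • 1) (h : A.IsHermitian) (i : n) : h.eigenvalues i = c := by
  subst hAc
  rw [h.eigenvalues_eq]
  simp only [Matrix.smul_mulVec, Matrix.one_mulVec, dotProduct_smul]
  rw [dotProduct_comm, ← EuclideanSpace.inner_eq_star_dotProduct, inner_self_eq_norm_sq_to_K,
    h.eigenvectorBasis.orthonormal.1 i]
  simp

end Aux

/-- a channel with a maximally-mixed output cannot be entropy-approximated
by a channel of Kraus rank smaller than `e^{−ε}|B|`. -/
theorem stmt18 (a b : ℕ)
    (N : Matrix (Fin a) (Fin a) ℂ → Matrix (Fin b) (Fin b) ℂ) (hN : IsCPTP N)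
    (ψ : Fin a → ℂ) (hψ : ∑ i, ‖ψ i‖ ^ 2 = 1)
    (hNψ : N (projVec ψ) = ((b : ℂ))⁻¹ • 1)
    (ε : ℝ) (hε : 0 < ε)
    (Nh : Matrix (Fin a) (Fin a) ℂ → Matrix (Fin b) (Fin b) ℂ) (hNh : IsCPTP Nh)
    (happrox : ∀ ρ : Matrix (Fin a) (Fin a) ℂ, IsDensity ρ →
      |vonNeumannEntropy (Nh ρ) - vonNeumannEntropy (N ρ)| ≤ ε) :
    Real.exp (-ε) * b ≤ (krausRank Nh : ℝ) := by
  classical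
  -- basic facts about P = |ψ⟩⟨ψ|
  have hPtr : (projVec ψ).trace = 1 := by
    have h1 : (projVec ψ).trace = ∑ i, ((‖ψ i‖ ^ 2 : ℝ) : ℂ) := by
      unfold Matrix.trace Matrix.diag projVec
      refine Finset.sum_congr rfl fun i _ => ?_
      simp [Complex.star_def, Complex.mul_conj, Complex.sq_norm]
    rw [h1, ← Complex.ofReal_sum, hψ, Complex.ofReal_one]
  have hPfact : projVec ψ = (Matrix.of fun (_ : Unit) j => star (ψ j))ᴴ *
      (Matrix.of fun (_ : Unit) j => star (ψ j)) := by
    ext i j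
    simp [Matrix.mul_apply, Matrix.conjTranspose_apply, projVec]
  have hPpsd : (projVec ψ).PosSemidef := by
    rw [hPfact]; exact Matrix.posSemidef_conjTranspose_mul_self _
  have hPrank : (projVec ψ).rank ≤ 1 := by
    rw [hPfact]
    refine (Matrix.rank_mul_le_left _ _).trans ?_
    exact (Matrix.rank_le_card_width _).trans (by simp)
  have hPdens : IsDensity (projVec ψ) := ⟨hPpsd, hPtr⟩
  have hb : 0 < b := by
    rcases Nat.eq_zero_or_pos b with h0 | h
    · exfalso
      have ht := hN.2 (projVec ψ)
      rw [hNψ, hPtr] at ht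
      subst h0
      simp [Matrix.trace] at ht
    · exact h
  have hbR : (0:ℝ) < b := by exact_mod_cast hb
  -- entropy of N(P) = log b
  have key : ((b:ℂ))⁻¹ • (1 : Matrix (Fin b) (Fin b) ℂ)
      = (((b:ℝ)⁻¹ : ℝ) : ℂ) • 1 := by push_cast; rfl
  have hH1 : ((((b:ℝ)⁻¹ : ℝ) : ℂ) • (1 : Matrix (Fin b) (Fin b) ℂ)).IsHermitian := by
    unfold Matrix.IsHermitian
    rw [Matrix.conjTranspose_smul, Matrix.conjTranspose_one]
    simp
  have hSN : vonNeumannEntropy (N (projVec ψ)) = Real.log b := by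
    rw [hNψ, key, vonNeumannEntropy, dif_pos hH1]
    have heig := myEig_smul_one (n := Fin b) ((b:ℝ)⁻¹) rfl hH1
    simp only [heig]
    rw [Finset.sum_const, Finset.card_univ, Fintype.card_fin, Real.log_inv, nsmul_eq_mul]
    field_simp
  -- minimal Kraus decomposition of Nh
  set r := krausRank Nh with hr
  have hmem : r ∈
      {s : ℕ | ∃ K : Fin s → Matrix (Fin b) (Fin a) ℂ, HasKraus Nh K} := by
    obtain ⟨s, K, hKs⟩ := hNh.1
    exact Nat.sInf_mem ⟨s, K, hKs⟩
  obtain ⟨K, hK⟩ := hmem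
  set σ := Nh (projVec ψ) with hσ
  have hσeq : σ = ∑ i : Fin r, K i * projVec ψ * (K i)ᴴ := hK (projVec ψ)
  have hσpsd : σ.PosSemidef := by
    rw [hσeq]
    refine Finset.sum_induction _ _ (fun x y hx hy => hx.add hy) Matrix.PosSemidef.zero ?_
    intro i _
    exact hPpsd.mul_mul_conjTranspose_same (K i)
  have hσtr : σ.trace = 1 := by rw [hσ, hNh.2 (projVec ψ), hPtr]
  have hH := hσpsd.1
  set eig := hH.eigenvalues with heigdef
  have heignn : ∀ i, 0 ≤ eig i := hσpsd.eigenvalues_nonneg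
  have hsum1 : ∑ i, eig i = 1 := by
    have h2 := (myTrace_eq_sum_eigs hH).symm
    rw [hσtr, ← Complex.ofReal_sum] at h2
    exact_mod_cast h2
  have hrank : σ.rank ≤ r := by
    rw [hσeq]
    refine (myRank_sum_le _ _).trans ?_
    calc ∑ i : Fin r, (K i * projVec ψ * (K i)ᴴ).rank
        ≤ ∑ _i : Fin r, 1 := Finset.sum_le_sum (fun i _ =>
          (Matrix.rank_mul_le_left _ _).trans
            ((Matrix.rank_mul_le_right _ _).trans hPrank))
      _ = r := by simp
  set T := Finset.univ.filter (fun i => eig i ≠ 0) with hT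
  have hTsum : ∑ i ∈ T, eig i = 1 := by
    rw [hT, Finset.sum_filter_of_ne (fun x _ h => h), hsum1]
  have hTcard_le : T.card ≤ r := by
    have h1 : Fintype.card {i // hH.eigenvalues i ≠ 0} = T.card := by
      rw [Fintype.card_subtype]
    have h2 := hH.rank_eq_card_non_zero_eigs
    omega
  have hTpos : 0 < T.card := by
    rcases Finset.eq_empty_or_nonempty T with h | h
    · rw [h, Finset.sum_empty] at hTsum; norm_num at hTsum
    · exact Finset.card_pos.2 h
  -- entropy of σ is at most log |T|
  have hent : vonNeumannEntropy σ ≤ Real.log T.card := by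
    rw [vonNeumannEntropy, dif_pos hH]
    have e1 : -∑ i, eig i * Real.log (eig i) = ∑ i ∈ T, eig i * Real.log (eig i)⁻¹ := by
      have e0 : ∑ i ∈ T, eig i * Real.log (eig i)⁻¹ = ∑ i, eig i * Real.log (eig i)⁻¹ := by
        rw [hT]; exact Finset.sum_filter_of_ne (fun x _ hx h0 => hx (by simp [h0]))
      have h3 : ∀ i, eig i * Real.log (eig i)⁻¹ = -(eig i * Real.log (eig i)) := fun i => by
        rw [Real.log_inv]; ring
      rw [e0]
      simp only [h3, Finset.sum_neg_distrib]
    rw [e1]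
    have hJ := strictConcaveOn_log_Ioi.concaveOn.le_map_sum (t := T) (w := eig)
      (p := fun i => (eig i)⁻¹) (fun i _ => heignn i) hTsum (fun i hi => by
        have hne : eig i ≠ 0 := (Finset.mem_filter.1 hi).2
        exact Set.mem_Ioi.2 (inv_pos.2 (lt_of_le_of_ne (heignn i) (Ne.symm hne))))
    have hc : ∑ i ∈ T, eig i • (eig i)⁻¹ = (T.card : ℝ) := by
      have h4 : ∀ i ∈ T, eig i • (eig i)⁻¹ = 1 := fun i hi => by
        rw [smul_eq_mul, mul_inv_cancel₀ (Finset.mem_filter.1 hi).2]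
      rw [Finset.sum_congr rfl h4, Finset.sum_const, nsmul_eq_mul, mul_one]
    rw [hc] at hJ
    simpa [smul_eq_mul] using hJ
  -- combine everything
  have hlow : Real.log b - ε ≤ vonNeumannEntropy σ := by
    have h5 := happrox (projVec ψ) hPdens
    rw [hSN] at h5
    have h6 := (abs_le.1 h5).1
    rw [← hσ] at h6
    linarith
  have hlog : Real.log b - ε ≤ Real.log r := by
    refine hlow.trans (hent.trans ?_)
    exact Real.log_le_log (by exact_mod_cast hTpos) (by exact_mod_cast hTcard_le)
  have hrpos : (0:ℝ) < r := by exact_mod_cast lt_of_lt_of_le hTpos hTcard_le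
  have h7 := Real.exp_le_exp.2 hlog
  rw [Real.exp_sub, Real.exp_log hbR, Real.exp_log hrpos] at h7
  rw [Real.exp_neg]
  rw [div_eq_mul_inv] at h7
  linarith

end
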